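/- Let σ_{ij} and α_{ij} be the operators on ℂ^d ⊗ ℂ^d defined by σ_{ij} = (|ij⟩+|ji⟩)(⟨ij|+⟨ji|)/2 for i ≠ j, σ_{ii} = |ii⟩⟨ii|, α_{ij} = (|ij⟩−|ji⟩)(⟨ij|−⟨ji|)/2, and define the map Π(τ) = ∑_{i≥j} σ_{ij} τ σ_{ij} + ∑_{i>j} α_{ij} τ α_{ij}. Then for every positive semidefinite τ, the operator Π(τ^Γ)^Γ is positive semidefinite; explicitly Π(τ^Γ)^Γ = (1/2)∑_{i≠j} ⟨ij|τ|ij⟩(|ij⟩⟨ij| + |ji⟩⟨ji|) + (1/2)·D(τ + τ*)D, where D = ∑_i |ii⟩⟨ii| and τ* is the entrywise complex conjugate in the product basis. -/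

import Mathlib

open scoped ComplexOrder

/-- The basis vector `|ij⟩` of `ℂ^d ⊗ ℂ^d`. -/
def ketC {d : ℕ} (i j : Fin d) : Fin d × Fin d → ℂ := fun p => if p = (i, j) then 1 else 0

/-- `σ_{ij} = (|ij⟩+|ji⟩)(⟨ij|+⟨ji|)/2` for `i ≠ j`, `σ_{ii} = |ii⟩⟨ii|`. -/
noncomputable def sigmaOpC {d : ℕ} (i j : Fin d) : Matrix (Fin d × Fin d) (Fin d × Fin d) ℂ :=
  if i = j then Matrix.vecMulVec (ketC i i) (ketC i i)
  else (1/2 : ℂ) • Matrix.vecMulVec (ketC i j + ketC j i) (ketC i j + ketC j i)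

/-- `α_{ij} = (|ij⟩−|ji⟩)(⟨ij|−⟨ji|)/2`. -/
noncomputable def alphaOpC {d : ℕ} (i j : Fin d) : Matrix (Fin d × Fin d) (Fin d × Fin d) ℂ :=
  (1/2 : ℂ) • Matrix.vecMulVec (ketC i j - ketC j i) (ketC i j - ketC j i)

/-- Partial transpose: `(|ij⟩⟨kl|)^Γ = |il⟩⟨kj|`. -/
def ptransC {d : ℕ} (M : Matrix (Fin d × Fin d) (Fin d × Fin d) ℂ) :
    Matrix (Fin d × Fin d) (Fin d × Fin d) ℂ :=
  fun p q => M (p.1, q.2) (q.1, p.2)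

section Helpers

open Matrix

private lemma outer_mul_mul {d : ℕ} (u v w z : Fin d × Fin d → ℂ)
    (x : Matrix (Fin d × Fin d) (Fin d × Fin d) ℂ) :
    vecMulVec u v * x * vecMulVec w z = (v ⬝ᵥ x *ᵥ w) • vecMulVec u z := by
  ext a b
  simp only [Matrix.mul_apply, Matrix.vecMulVec_apply, Matrix.smul_apply, dotProduct,
    Matrix.mulVec, smul_eq_mul, Finset.sum_mul, Finset.mul_sum]
  rw [Finset.sum_comm]
  exact Finset.sum_congr rfl fun c _ => Finset.sum_congr rfl fun e _ => by ring

private lemma ket_dot {d : ℕ} (i j k l : Fin d)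
    (x : Matrix (Fin d × Fin d) (Fin d × Fin d) ℂ) :
    ketC i j ⬝ᵥ x *ᵥ ketC k l = x (i, j) (k, l) := by
  simp [dotProduct, Matrix.mulVec, ketC, ite_mul, mul_ite]

private lemma sum_le_split {d : ℕ} {M : Type*} [AddCommMonoid M] (f : Fin d → Fin d → M) :
    ∑ i, ∑ j ∈ Finset.univ.filter (fun j => j ≤ i), f i j
      = (∑ i, ∑ j ∈ Finset.univ.filter (fun j => j < i), f i j) + ∑ i, f i i := by
  rw [← Finset.sum_add_distrib]
  refine Finset.sum_congr rfl fun i _ => ?_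
  have h : Finset.univ.filter (fun j => j ≤ i)
      = insert i (Finset.univ.filter (fun j => j < i)) := by
    ext j
    simp [le_iff_lt_or_eq, or_comm]
  rw [h, Finset.sum_insert (by simp), add_comm]

private lemma sum_ite_swap₁ {d : ℕ} (P : Fin d → Prop) [DecidablePred P] (b : Fin d)
    (f : Fin d → ℂ) :
    (∑ x, if P x then if b = x then f x else 0 else 0) = if P b then f b else 0 := by
  have h : ∀ x, (if P x then if b = x then f x else 0 else 0)
      = if b = x then (if P b then f b else 0) else 0 := by
    intro x
    by_cases hbx : b = x
    · subst hbx; simp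
    · simp [hbx]
  simp [h]

private lemma sum_ite_swap₂ {d : ℕ} (P : Fin d → Prop) [DecidablePred P] (b : Fin d)
    (f : Fin d → ℂ) :
    (∑ x, if P x then if x = b then f x else 0 else 0) = if P b then f b else 0 := by
  have h : ∀ x, (if P x then if x = b then f x else 0 else 0)
      = if x = b then (if P b then f b else 0) else 0 := by
    intro x
    by_cases hbx : x = b
    · subst hbx; simp
    · simp [hbx]
  simp [h]

private lemma sum_ite_swap₃ {d : ℕ} (P : Fin d → Prop) [DecidablePred P] (b : Fin d)
    (f : Fin d → ℂ) :
    (∑ x, if P x then 0 else if b = x then f x else 0) = if P b then 0 else f b := by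
  have h : ∀ x, (if P x then 0 else if b = x then f x else 0)
      = if b = x then (if P b then 0 else f b) else 0 := by
    intro x
    by_cases hbx : b = x
    · subst hbx; simp
    · simp [hbx]
  simp [h]

private lemma sum_ite_swap₄ {d : ℕ} (P : Fin d → Prop) [DecidablePred P] (b : Fin d)
    (f : Fin d → ℂ) :
    (∑ x, if P x then 0 else if x = b then f x else 0) = if P b then 0 else f b := by
  have h : ∀ x, (if P x then 0 else if x = b then f x else 0)
      = if x = b then (if P b then 0 else f b) else 0 := by
    intro x
    by_cases hbx : x = b
    · subst hbx; simp
    · simp [hbx]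
  simp [h]

private lemma sigma_off {d : ℕ} {i j : Fin d} (h : i ≠ j)
    (x : Matrix (Fin d × Fin d) (Fin d × Fin d) ℂ) :
    sigmaOpC i j * x * sigmaOpC i j
      = ((1/4 : ℂ) * (x (i, j) (i, j) + x (i, j) (j, i) + x (j, i) (i, j) + x (j, i) (j, i))) •
          vecMulVec (ketC i j + ketC j i) (ketC i j + ketC j i) := by
  rw [sigmaOpC, if_neg h, smul_mul_assoc, smul_mul_assoc, mul_smul_comm, outer_mul_mul,
    smul_smul, smul_smul]
  congr 1
  rw [Matrix.mulVec_add, dotProduct_add, add_dotProduct, add_dotProduct, ket_dot, ket_dot,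
    ket_dot, ket_dot]
  ring

private lemma sigma_diag {d : ℕ} (i : Fin d)
    (x : Matrix (Fin d × Fin d) (Fin d × Fin d) ℂ) :
    sigmaOpC i i * x * sigmaOpC i i = (x (i, i) (i, i)) • vecMulVec (ketC i i) (ketC i i) := by
  rw [sigmaOpC, if_pos rfl, outer_mul_mul, ket_dot]

private lemma alpha_eq {d : ℕ} (i j : Fin d)
    (x : Matrix (Fin d × Fin d) (Fin d × Fin d) ℂ) :
    alphaOpC i j * x * alphaOpC i j
      = ((1/4 : ℂ) * (x (i, j) (i, j) - x (i, j) (j, i) - x (j, i) (i, j) + x (j, i) (j, i))) •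
          vecMulVec (ketC i j - ketC j i) (ketC i j - ketC j i) := by
  rw [alphaOpC, smul_mul_assoc, smul_mul_assoc, mul_smul_comm, outer_mul_mul,
    smul_smul, smul_smul]
  congr 1
  rw [Matrix.mulVec_sub, dotProduct_sub, sub_dotProduct, sub_dotProduct, ket_dot, ket_dot,
    ket_dot, ket_dot]
  ring

private lemma star_ketC {d : ℕ} (i j : Fin d) : star (ketC i j) = ketC i j := by
  funext p
  simp [ketC, Pi.star_apply, apply_ite (star : ℂ → ℂ)]

private lemma psd_outer {d : ℕ} (v : Fin d × Fin d → ℂ) (hv : star v = v) :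
    (Matrix.vecMulVec v v).PosSemidef := by
  have h : vecMulVec v v = replicateCol Unit v * (replicateCol Unit v)ᴴ := by
    rw [Matrix.conjTranspose_replicateCol, hv, ← Matrix.vecMulVec_eq Unit]
  rw [h]
  exact Matrix.posSemidef_self_mul_conjTranspose _

private lemma psd_smul {n : Type*} [Fintype n] {c : ℂ} (hc : 0 ≤ c) {M : Matrix n n ℂ}
    (hM : M.PosSemidef) : (c • M).PosSemidef := by
  have hcr : star c = c := by
    rw [Complex.star_def, Complex.conj_eq_iff_im]
    exact (Complex.le_def.mp hc).2.symm
  refine Matrix.PosSemidef.of_dotProduct_mulVec_nonneg ?_ ?_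
  · show (c • M)ᴴ = c • M
    ext p q
    simp only [Matrix.conjTranspose_apply, Matrix.smul_apply, smul_eq_mul, star_mul', hcr]
    rw [← Matrix.conjTranspose_apply, hM.1]
  · intro x
    rw [Matrix.smul_mulVec, dotProduct_smul, smul_eq_mul]
    exact mul_nonneg hc (hM.dotProduct_mulVec_nonneg x)

private lemma psd_diag {n : Type*} [Fintype n] [DecidableEq n] {M : Matrix n n ℂ}
    (hM : M.PosSemidef) (p : n) : 0 ≤ M p p := by
  have h := hM.dotProduct_mulVec_nonneg (Pi.single p 1)
  simpa [dotProduct, Matrix.mulVec, Pi.single_apply, mul_ite, ite_mul,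
    apply_ite (star : ℂ → ℂ)] using h

private lemma psd_sum {n : Type*} [Fintype n] {ι : Type*} (s : Finset ι)
    (f : ι → Matrix n n ℂ) (h : ∀ i ∈ s, (f i).PosSemidef) : (∑ i ∈ s, f i).PosSemidef :=
  Finset.sum_induction f _ (fun _ _ ha hb => ha.add hb) Matrix.PosSemidef.zero h

private lemma D_apply {d : ℕ} (p q : Fin d × Fin d) :
    (∑ i, Matrix.vecMulVec (ketC i i) (ketC i i) : Matrix (Fin d × Fin d) (Fin d × Fin d) ℂ) p q
      = if p = q ∧ p.1 = p.2 then 1 else 0 := by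
  obtain ⟨p1, p2⟩ := p; obtain ⟨q1, q2⟩ := q
  simp [Matrix.sum_apply, Matrix.vecMulVec_apply, ketC, Prod.mk.injEq, ite_and, mul_ite, ite_mul]
  split_ifs <;> simp_all

end Helpers

set_option maxHeartbeats 2000000 in
theorem stmt12 (d : ℕ)
    (Pi0 : Matrix (Fin d × Fin d) (Fin d × Fin d) ℂ → Matrix (Fin d × Fin d) (Fin d × Fin d) ℂ)
    (hPi : ∀ x, Pi0 x
      = ∑ i, ∑ j ∈ Finset.univ.filter (fun j => j ≤ i), sigmaOpC i j * x * sigmaOpC i j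
      + ∑ i, ∑ j ∈ Finset.univ.filter (fun j => j < i), alphaOpC i j * x * alphaOpC i j)
    (D : Matrix (Fin d × Fin d) (Fin d × Fin d) ℂ)
    (hD : D = ∑ i, Matrix.vecMulVec (ketC i i) (ketC i i))
    (τ : Matrix (Fin d × Fin d) (Fin d × Fin d) ℂ) (hτ : τ.PosSemidef) :
    (ptransC (Pi0 (ptransC τ))).PosSemidef ∧
    ptransC (Pi0 (ptransC τ))
      = (1/2 : ℂ) • (∑ i, ∑ j ∈ Finset.univ.filter (fun j => j ≠ i),
          τ (i, j) (i, j) • (Matrix.vecMulVec (ketC i j) (ketC i j)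
            + Matrix.vecMulVec (ketC j i) (ketC j i)))
      + (1/2 : ℂ) • (D * (τ + τ.map (starRingEnd ℂ)) * D) := by
  have hH : ∀ u v, (starRingEnd ℂ) (τ u v) = τ v u := by
    intro u v
    have h := congrFun (congrFun hτ.1 v) u
    rw [Matrix.conjTranspose_apply] at h
    exact h
  have heq : ptransC (Pi0 (ptransC τ))
      = (1/2 : ℂ) • (∑ i, ∑ j ∈ Finset.univ.filter (fun j => j ≠ i),
          τ (i, j) (i, j) • (Matrix.vecMulVec (ketC i j) (ketC i j)
            + Matrix.vecMulVec (ketC j i) (ketC j i)))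
      + (1/2 : ℂ) • (D * (τ + τ.map (starRingEnd ℂ)) * D) := by
    rw [hPi, hD]
    set x := ptransC τ with hx
    have h1 : (∑ i, ∑ j ∈ Finset.univ.filter (fun j => j ≤ i), sigmaOpC i j * x * sigmaOpC i j)
        = (∑ i, ∑ j ∈ Finset.univ.filter (fun j => j < i),
            ((1/4 : ℂ) * (x (i, j) (i, j) + x (i, j) (j, i) + x (j, i) (i, j) + x (j, i) (j, i))) •
              Matrix.vecMulVec (ketC i j + ketC j i) (ketC i j + ketC j i))
          + ∑ i, (x (i, i) (i, i)) • Matrix.vecMulVec (ketC i i) (ketC i i) := by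
      rw [sum_le_split]
      congr 1
      · refine Finset.sum_congr rfl fun i _ => Finset.sum_congr rfl fun j hj => ?_
        have hij : i ≠ j := by
          simp only [Finset.mem_filter] at hj
          exact (ne_of_gt hj.2)
        exact sigma_off hij x
      · exact Finset.sum_congr rfl fun i _ => sigma_diag i x
    have h2 : (∑ i, ∑ j ∈ Finset.univ.filter (fun j => j < i), alphaOpC i j * x * alphaOpC i j)
        = ∑ i, ∑ j ∈ Finset.univ.filter (fun j => j < i),
            ((1/4 : ℂ) * (x (i, j) (i, j) - x (i, j) (j, i) - x (j, i) (i, j) + x (j, i) (j, i))) •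
              Matrix.vecMulVec (ketC i j - ketC j i) (ketC i j - ketC j i) :=
      Finset.sum_congr rfl fun i _ => Finset.sum_congr rfl fun j _ => alpha_eq i j x
    rw [h1, h2]
    clear h1 h2 hPi hD hτ
    ext ⟨p1, p2⟩ ⟨q1, q2⟩
    simp only [ptransC, hx]
    simp [Matrix.add_apply, Matrix.sum_apply, Matrix.smul_apply, Matrix.vecMulVec_apply,
      Matrix.mul_apply, Matrix.map_apply, ketC, Prod.mk.injEq, ite_and, mul_ite, ite_mul,
      mul_add, add_mul, mul_sub, sub_mul, Pi.add_apply, Pi.sub_apply,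
      Finset.sum_add_distrib, Finset.sum_sub_distrib, sum_ite_swap₁, sum_ite_swap₂, sum_ite_swap₃, sum_ite_swap₄,
      smul_eq_mul, D_apply, hH]
    clear hx x
    split_ifs <;> subst_vars <;>
      first
        | ring1
        | (exfalso; simp only [Fin.lt_def, Fin.ext_iff, not_lt, not_true] at *; try omega)
  refine ⟨?_, heq⟩
  rw [heq]
  have hhalf : (0 : ℂ) ≤ 1/2 := by
    rw [Complex.le_def]
    norm_num
  have hmap : τ.map (starRingEnd ℂ) = τ.transpose := by
    ext p q
    simp [Matrix.map_apply, Matrix.transpose_apply, hH]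
  have hDH : D.conjTranspose = D := by
    rw [hD]
    ext p q
    rw [Matrix.conjTranspose_apply, D_apply, D_apply]
    simp only [apply_ite (star : ℂ → ℂ), star_one, star_zero]
    by_cases h : p = q
    · subst h; rfl
    · rw [if_neg, if_neg]
      · exact fun hc => h hc.1
      · exact fun hc => h hc.1.symm
  apply Matrix.PosSemidef.add
  · refine psd_smul hhalf (psd_sum _ _ fun i _ => psd_sum _ _ fun j _ => ?_)
    exact psd_smul (psd_diag hτ _)
      ((psd_outer _ (star_ketC i j)).add (psd_outer _ (star_ketC j i)))
  · refine psd_smul hhalf ?_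
    have : D * (τ + τ.map (starRingEnd ℂ)) * D = D.conjTranspose * (τ + τ.transpose) * D := by
      rw [hDH, hmap]
    rw [this]
    exact (hτ.add hτ.transpose).conjTranspose_mul_mul_same D
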